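/- Let g : (0,∞) → ℝ and let ĝ(x) = x·g(1/x) be its transpose. Then the noncommutative perspectives satisfy P_g(X,Y) = P_{ĝ}(Y,X) for all positive definite Hermitian matrices X, Y of the same size. -/

import Mathlib

open Matrix ComplexOrder

/-- The noncommutative perspective
`P_g(X,Y) = X^{1/2} g(X^{−1/2} Y X^{−1/2}) X^{1/2}`, with `g`, square roots and
inverse square roots applied spectrally via the continuous functional calculus. -/
noncomputable def ncPerspective {n : ℕ} (g : ℝ → ℝ)
    (X Y : Matrix (Fin n) (Fin n) ℂ) : Matrix (Fin n) (Fin n) ℂ :=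
  cfc Real.sqrt X *
    cfc g (cfc (fun t : ℝ => (Real.sqrt t)⁻¹) X * Y *
      cfc (fun t : ℝ => (Real.sqrt t)⁻¹) X) *
    cfc Real.sqrt X

open Polynomial in
private lemma ncp_aeval_semiconj {n : ℕ} (a x y : Matrix (Fin n) (Fin n) ℂ)
    (h : x * a = a * y) (p : ℝ[X]) :
    (aeval x p) * a = a * (aeval y p) := by
  induction p using Polynomial.induction_on' with
  | add p q hp hq => simp only [map_add, add_mul, mul_add, hp, hq]
  | monomial k c =>
    have hpow : ∀ m : ℕ, x ^ m * a = a * y ^ m := by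
      intro m
      induction m with
      | zero => simp
      | succ m ih => rw [pow_succ, pow_succ, mul_assoc, h, ← mul_assoc, ih, mul_assoc]
    simp only [aeval_monomial]
    rw [mul_assoc, hpow k, ← mul_assoc, Algebra.commutes c a, mul_assoc]

private lemma ncp_exists_poly (s : Set ℝ) (hs : s.Finite) (g : ℝ → ℝ) :
    ∃ p : Polynomial ℝ, ∀ x ∈ s, p.eval x = g x := by
  classical
  refine ⟨Lagrange.interpolate hs.toFinset id g, fun x hx => ?_⟩
  simpa using Lagrange.eval_interpolate_at_node g (Set.injOn_id _)
    ((Set.Finite.mem_toFinset hs).mpr hx)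

open Polynomial in
private lemma ncp_key {n : ℕ} (g : ℝ → ℝ)
    (X Y A A' B B' : Matrix (Fin n) (Fin n) ℂ)
    (hAsa : _root_.IsSelfAdjoint A) (hA'sa : _root_.IsSelfAdjoint A')
    (hBsa : _root_.IsSelfAdjoint B) (hB'sa : _root_.IsSelfAdjoint B')
    (hAA' : A * A' = 1) (hA'A : A' * A = 1)
    (hBB' : B * B' = 1) (hB'B : B' * B = 1)
    (hXe : X = A * A) (hYe : Y = B * B) :
    A * cfc g (A' * Y * A') * A = B * cfc (fun x => x * g x⁻¹) (B' * X * B') * B := by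
  classical
  -- cancellation helpers
  have hAA'c : ∀ Z : Matrix (Fin n) (Fin n) ℂ, A * (A' * Z) = Z := fun Z => by
    rw [← mul_assoc, hAA', one_mul]
  have hA'Ac : ∀ Z : Matrix (Fin n) (Fin n) ℂ, A' * (A * Z) = Z := fun Z => by
    rw [← mul_assoc, hA'A, one_mul]
  have hBB'c : ∀ Z : Matrix (Fin n) (Fin n) ℂ, B * (B' * Z) = Z := fun Z => by
    rw [← mul_assoc, hBB', one_mul]
  have hB'Bc : ∀ Z : Matrix (Fin n) (Fin n) ℂ, B' * (B * Z) = Z := fun Z => by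
    rw [← mul_assoc, hB'B, one_mul]
  set M : Matrix (Fin n) (Fin n) ℂ := A' * Y * A' with hM
  set N : Matrix (Fin n) (Fin n) ℂ := B' * X * B' with hN
  have hYsa : _root_.IsSelfAdjoint Y := by
    show star Y = Y
    rw [hYe, Matrix.star_mul, hBsa.star_eq]
  have hXsa : _root_.IsSelfAdjoint X := by
    show star X = X
    rw [hXe, Matrix.star_mul, hAsa.star_eq]
  have hMsa : _root_.IsSelfAdjoint M := by
    show star M = M
    rw [hM, Matrix.star_mul, Matrix.star_mul, hA'sa.star_eq, hYsa.star_eq, mul_assoc]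
  have hNsa : _root_.IsSelfAdjoint N := by
    show star N = N
    rw [hN, Matrix.star_mul, Matrix.star_mul, hB'sa.star_eq, hXsa.star_eq, mul_assoc]
  have hMfin : (spectrum ℝ M).Finite := M.finite_real_spectrum
  have hNfin : (spectrum ℝ N).Finite := N.finite_real_spectrum
  -- N is a unit
  have hAu : IsUnit A := ⟨⟨A, A', hAA', hA'A⟩, rfl⟩
  have hB'u : IsUnit B' := ⟨⟨B', B, hB'B, hBB'⟩, rfl⟩
  have hXu : IsUnit X := hXe ▸ hAu.mul hAu
  have hNu : IsUnit N := (hB'u.mul hXu).mul hB'u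
  have hspecN : ∀ t ∈ spectrum ℝ N, t ≠ 0 := by
    intro t ht h0
    exact (spectrum.zero_notMem_iff (R := ℝ)).mpr hNu (h0 ▸ ht)
  -- C = cfc inv N
  set C : Matrix (Fin n) (Fin n) ℂ := cfc (fun t : ℝ => t⁻¹) N with hC
  have hCsa : _root_.IsSelfAdjoint C := cfc_predicate _ N
  have hCN : C * N = 1 := by
    have h1 := cfc_mul (fun t : ℝ => t⁻¹) (fun t : ℝ => t) N
      (hNfin.continuousOn _) (hNfin.continuousOn _)
    rw [cfc_id' ℝ N hNsa] at h1
    rw [hC, ← h1, cfc_congr (g := fun _ : ℝ => (1 : ℝ))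
      (fun t ht => inv_mul_cancel₀ (hspecN t ht)), cfc_const_one ℝ N]
  have hNC : N * C = 1 := by
    have h1 := cfc_mul (fun t : ℝ => t) (fun t : ℝ => t⁻¹) N
      (hNfin.continuousOn _) (hNfin.continuousOn _)
    rw [cfc_id' ℝ N hNsa] at h1
    rw [hC, ← h1, cfc_congr (g := fun _ : ℝ => (1 : ℝ))
      (fun t ht => mul_inv_cancel₀ (hspecN t ht)), cfc_const_one ℝ N]
  -- S = A' * B
  set S : Matrix (Fin n) (Fin n) ℂ := A' * B with hS
  have hSinv : S * (B' * A) = 1 := by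
    simp only [hS, mul_assoc, hBB'c, hA'A]
  have hNSS : N * ((B * A') * S) = 1 := by
    simp only [hS, hN, hXe, mul_assoc, hB'Bc, hAA'c, hA'Ac, hB'B]
  have hCeq : C = (B * A') * S := by
    have h2 : C * (N * ((B * A') * S)) = C := by rw [hNSS, mul_one]
    calc C = C * (N * ((B * A') * S)) := h2.symm
    _ = (C * N) * ((B * A') * S) := (mul_assoc _ _ _).symm
    _ = (B * A') * S := by rw [hCN, one_mul]
  have hMSC : M * S = S * C := by
    rw [hCeq]
    simp only [hS, hM, hYe, mul_assoc]
  -- interpolation polynomial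
  obtain ⟨p, hp⟩ := ncp_exists_poly (spectrum ℝ M ∪ (fun t : ℝ => t⁻¹) '' spectrum ℝ N)
    (hMfin.union (hNfin.image _)) g
  have hgM : cfc g M = aeval M p := by
    rw [cfc_congr (g := fun t : ℝ => p.eval t) (fun t ht => (hp t (Or.inl ht)).symm),
      cfc_polynomial p M hMsa]
  have hgN : cfc (fun x : ℝ => x * g x⁻¹) N = N * aeval C p := by
    have h31 : cfc (fun x : ℝ => g x⁻¹) N = aeval C p := by
      calc cfc (fun x : ℝ => g x⁻¹) N
          = cfc (fun x : ℝ => p.eval x⁻¹) N :=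
            cfc_congr fun x hx => (hp _ (Or.inr ⟨x, hx, rfl⟩)).symm
        _ = cfc (fun t : ℝ => p.eval t) (cfc (fun t : ℝ => t⁻¹) N) :=
            cfc_comp (fun t : ℝ => p.eval t) (fun t : ℝ => t⁻¹) N hNsa
              (((hNfin.image _).continuousOn _)) (hNfin.continuousOn _)
        _ = aeval C p := cfc_polynomial p C hCsa
    have h32 := cfc_mul (fun x : ℝ => x) (fun x : ℝ => g x⁻¹) N
      (hNfin.continuousOn _) (hNfin.continuousOn _)
    rw [cfc_id' ℝ N hNsa, h31] at h32
    exact h32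
  -- put together
  rw [hgM, hgN]
  have hsemi : aeval M p * S = S * aeval C p := ncp_aeval_semiconj S M C hMSC p
  have hNsemi : aeval C p * N = N * aeval C p :=
    ncp_aeval_semiconj N C C (by rw [hCN, hNC]) p
  have h1 : aeval M p = S * aeval C p * (B' * A) := by
    rw [← hsemi, mul_assoc, hSinv, mul_one]
  rw [h1, ← hNsemi]
  simp only [hS, hN, hXe, mul_assoc, hAA'c, hA'Ac, hBB'c, hB'Bc, hAA', hA'A,
    hBB', hB'B, one_mul, mul_one]

/-- Transpose identity for noncommutative perspectives:
`P_g(X,Y) = P_ĝ(Y,X)` where `ĝ(x) = x·g(1/x)`. -/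
theorem ncPerspective_transpose {n : ℕ} (g : ℝ → ℝ)
    (X Y : Matrix (Fin n) (Fin n) ℂ) (hX : X.PosDef) (hY : Y.PosDef) :
    ncPerspective g X Y = ncPerspective (fun x => x * g x⁻¹) Y X := by
  classical
  have hXh : X.IsHermitian := hX.1
  have hYh : Y.IsHermitian := hY.1
  have hXsa : _root_.IsSelfAdjoint X := hXh.isSelfAdjoint
  have hYsa : _root_.IsSelfAdjoint Y := hYh.isSelfAdjoint
  have hXfin : (spectrum ℝ X).Finite := X.finite_real_spectrum
  have hYfin : (spectrum ℝ Y).Finite := Y.finite_real_spectrum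
  have hspecX : ∀ t ∈ spectrum ℝ X, 0 < t := by
    intro t ht
    rw [hXh.spectrum_real_eq_range_eigenvalues] at ht
    obtain ⟨i, rfl⟩ := ht
    exact hX.eigenvalues_pos i
  have hspecY : ∀ t ∈ spectrum ℝ Y, 0 < t := by
    intro t ht
    rw [hYh.spectrum_real_eq_range_eigenvalues] at ht
    obtain ⟨i, rfl⟩ := ht
    exact hY.eigenvalues_pos i
  have hAA' : cfc Real.sqrt X * cfc (fun t : ℝ => (Real.sqrt t)⁻¹) X = 1 := by
    have h := cfc_mul Real.sqrt (fun t : ℝ => (Real.sqrt t)⁻¹) X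
      (hXfin.continuousOn _) (hXfin.continuousOn _)
    rw [← h, cfc_congr (g := fun _ : ℝ => (1 : ℝ)) (fun t ht =>
      mul_inv_cancel₀ (Real.sqrt_ne_zero'.mpr (hspecX t ht))), cfc_const_one ℝ X]
  have hA'A : cfc (fun t : ℝ => (Real.sqrt t)⁻¹) X * cfc Real.sqrt X = 1 := by
    have h := cfc_mul (fun t : ℝ => (Real.sqrt t)⁻¹) Real.sqrt X
      (hXfin.continuousOn _) (hXfin.continuousOn _)
    rw [← h, cfc_congr (g := fun _ : ℝ => (1 : ℝ)) (fun t ht =>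
      inv_mul_cancel₀ (Real.sqrt_ne_zero'.mpr (hspecX t ht))), cfc_const_one ℝ X]
  have hBB' : cfc Real.sqrt Y * cfc (fun t : ℝ => (Real.sqrt t)⁻¹) Y = 1 := by
    have h := cfc_mul Real.sqrt (fun t : ℝ => (Real.sqrt t)⁻¹) Y
      (hYfin.continuousOn _) (hYfin.continuousOn _)
    rw [← h, cfc_congr (g := fun _ : ℝ => (1 : ℝ)) (fun t ht =>
      mul_inv_cancel₀ (Real.sqrt_ne_zero'.mpr (hspecY t ht))), cfc_const_one ℝ Y]
  have hB'B : cfc (fun t : ℝ => (Real.sqrt t)⁻¹) Y * cfc Real.sqrt Y = 1 := by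
    have h := cfc_mul (fun t : ℝ => (Real.sqrt t)⁻¹) Real.sqrt Y
      (hYfin.continuousOn _) (hYfin.continuousOn _)
    rw [← h, cfc_congr (g := fun _ : ℝ => (1 : ℝ)) (fun t ht =>
      inv_mul_cancel₀ (Real.sqrt_ne_zero'.mpr (hspecY t ht))), cfc_const_one ℝ Y]
  have hXe : X = cfc Real.sqrt X * cfc Real.sqrt X := by
    have h := cfc_mul Real.sqrt Real.sqrt X (hXfin.continuousOn _) (hXfin.continuousOn _)
    rw [← h, cfc_congr (g := fun t : ℝ => t) (fun t ht =>
      Real.mul_self_sqrt (hspecX t ht).le), cfc_id' ℝ X hXsa]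
  have hYe : Y = cfc Real.sqrt Y * cfc Real.sqrt Y := by
    have h := cfc_mul Real.sqrt Real.sqrt Y (hYfin.continuousOn _) (hYfin.continuousOn _)
    rw [← h, cfc_congr (g := fun t : ℝ => t) (fun t ht =>
      Real.mul_self_sqrt (hspecY t ht).le), cfc_id' ℝ Y hYsa]
  exact ncp_key g X Y (cfc Real.sqrt X) (cfc (fun t : ℝ => (Real.sqrt t)⁻¹) X)
    (cfc Real.sqrt Y) (cfc (fun t : ℝ => (Real.sqrt t)⁻¹) Y)
    (cfc_predicate _ X) (cfc_predicate _ X) (cfc_predicate _ Y) (cfc_predicate _ Y)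
    hAA' hA'A hBB' hB'B hXe hYe
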